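/- Let Σ = {0,1} and let G : Σ* → Σ* with |G(x)| = |x| + 1 for all x, and suppose G is almost 1-1 (i.e., |{G(x) : x ∈ Σ^n}| = 2^n(1 − τ(n)) for some negligible τ). Then for any language family C, G is a pseudorandom generator against C if and only if the range of G is gap C-pseudorandom. -/

import Mathlib

/-- `μ` is negligible: eventually smaller than the inverse of every polynomial. -/
def Negligible (μ : ℕ → ℝ) : Prop :=
  ∀ k : ℕ, ∀ᶠ n in Filter.atTop, μ n ≤ 1 / (n:ℝ)^k

/-- Probability that a uniformly random string of length `n` lies in `A`. -/
noncomputable def probIn (A : Set (List Bool)) (n : ℕ) : ℝ :=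
  ({y : List Bool | y.length = n ∧ y ∈ A}.ncard : ℝ) / 2^n

/-- `G` (with stretch factor `n+1`) fools the language `A`. -/
noncomputable def Fools (G : List Bool → List Bool) (A : Set (List Bool)) : Prop :=
  Negligible fun n =>
    |({x : List Bool | x.length = n ∧ G x ∈ A}.ncard : ℝ) / 2^n - probIn A (n+1)|

/-- `G` is a pseudorandom generator against the language family `C`. -/
noncomputable def PRGAgainst (G : List Bool → List Bool)
    (C : Set (Set (List Bool))) : Prop :=
  ∀ A ∈ C, Fools G A

/-- `L` is gap `C`-pseudorandom. -/
noncomputable def GapPseudorandom (L : Set (List Bool))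
    (C : Set (Set (List Bool))) : Prop :=
  ∀ A ∈ C, Negligible fun n =>
    |(({w : List Bool | w.length = n ∧ w ∈ L ∧ w ∈ A}.ncard : ℝ)
      - ({w : List Bool | w.length = n ∧ w ∉ L ∧ w ∈ A}.ncard : ℝ))| / 2^n

open Filter

lemma neg_mono' {μ ν : ℕ → ℝ} (h : ∀ n, μ n ≤ ν n) (hν : Negligible ν) :
    Negligible μ := fun k => (hν k).mono fun n h1 => (h n).trans h1

lemma myNegAdd {μ ν : ℕ → ℝ} (hμ : Negligible μ) (hν : Negligible ν) :
    Negligible (fun n => μ n + ν n) := by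
  intro k
  filter_upwards [hμ (k+1), hν (k+1), eventually_ge_atTop 2] with n h1 h2 hn
  have hn' : (2:ℝ) ≤ (n:ℝ) := by exact_mod_cast hn
  have hnp : (0:ℝ) < (n:ℝ) := by linarith
  have hpk : (0:ℝ) < (n:ℝ)^k := pow_pos hnp k
  have hpk1 : (0:ℝ) < (n:ℝ)^(k+1) := pow_pos hnp (k+1)
  have hsum : μ n + ν n ≤ 2/(n:ℝ)^(k+1) := by
    have h3 := add_le_add h1 h2
    have h4 : (1:ℝ)/(n:ℝ)^(k+1) + 1/(n:ℝ)^(k+1) = 2/(n:ℝ)^(k+1) := by ring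
    linarith
  refine hsum.trans ?_
  rw [div_le_div_iff₀ hpk1 hpk, pow_succ]
  nlinarith

lemma neg_shift' {μ : ℕ → ℝ} (h : Negligible μ) : Negligible (fun n => μ (n+1)) := by
  intro k
  obtain ⟨N, hN⟩ := eventually_atTop.mp (h k)
  rw [eventually_atTop]
  refine ⟨max N 1, fun n hn => ?_⟩
  have h1 : 1 ≤ n := le_trans (le_max_right _ _) hn
  have hNn : N ≤ n + 1 := le_trans (le_trans (le_max_left N 1) hn) (Nat.le_succ n)
  refine (hN (n+1) hNn).trans ?_
  have hnp : (0:ℝ) < (n:ℝ) := by exact_mod_cast h1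
  apply one_div_le_one_div_of_le (pow_pos hnp k)
  have h' : ((n:ℝ)) ≤ ((n:ℝ)+1) := by linarith
  calc (n:ℝ)^k ≤ ((n:ℝ)+1)^k := pow_le_pow_left₀ (le_of_lt hnp) h' k
    _ = ((n+1 : ℕ) : ℝ)^k := by push_cast; ring

lemma neg_shift_back' {μ : ℕ → ℝ} (h : Negligible (fun n => μ (n+1))) : Negligible μ := by
  intro k
  obtain ⟨N, hN⟩ := eventually_atTop.mp (h (k+1))
  rw [eventually_atTop]
  refine ⟨max (N+1) (2^k+1), fun m hm => ?_⟩
  obtain ⟨n, rfl⟩ : ∃ n, m = n + 1 := ⟨m-1, by omega⟩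
  have h2k : 2^k ≤ n := by
    have := le_trans (le_max_right (N+1) (2^k+1)) hm; omega
  have hNn : N ≤ n := by
    have := le_trans (le_max_left (N+1) (2^k+1)) hm; omega
  refine (hN n hNn).trans ?_
  have h1n : 1 ≤ n := le_trans (Nat.one_le_two_pow) h2k
  have h1n' : (1:ℝ) ≤ (n:ℝ) := by exact_mod_cast h1n
  have hnp : (0:ℝ) < (n:ℝ) := by linarith
  have h2k' : (2:ℝ)^k ≤ (n:ℝ) := by exact_mod_cast h2k
  have key : ((n:ℝ)+1)^k ≤ (n:ℝ)^(k+1) := by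
    calc ((n:ℝ)+1)^k ≤ (2*(n:ℝ))^k := by
          apply pow_le_pow_left₀ (by linarith) (by linarith)
      _ = 2^k * (n:ℝ)^k := mul_pow 2 _ k
      _ ≤ (n:ℝ) * (n:ℝ)^k :=
          mul_le_mul_of_nonneg_right h2k' (le_of_lt (pow_pos hnp k))
      _ = (n:ℝ)^(k+1) := by rw [pow_succ]; ring
  apply one_div_le_one_div_of_le
  · exact pow_pos (by positivity) k
  · calc ((n+1:ℕ):ℝ)^k = ((n:ℝ)+1)^k := by push_cast; ring
      _ ≤ (n:ℝ)^(k+1) := key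

lemma ncard_len (n : ℕ) : {l : List Bool | l.length = n}.ncard = 2^n := by
  have h : Nat.card (List.Vector Bool n) = 2^n := by
    rw [Nat.card_eq_fintype_card, card_vector]; simp
  rw [← Nat.card_coe_set_eq]
  convert h using 2; rfl

/-- The core per-`n` estimate. -/
lemma core_est (G : List Bool → List Bool)
    (hstretch : ∀ x, (G x).length = x.length + 1)
    (τ : ℕ → ℝ)
    (halmost : ∀ n,
      ({u : List Bool | ∃ x : List Bool, x.length = n ∧ G x = u}.ncard : ℝ)
        = 2^n * (1 - τ n))
    (A : Set (List Bool)) (n : ℕ) :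
    abs (|({x : List Bool | x.length = n ∧ G x ∈ A}.ncard : ℝ) / 2^n - probIn A (n+1)|
      - |(({w : List Bool | w.length = n+1 ∧ w ∈ {u | ∃ x, G x = u} ∧ w ∈ A}.ncard : ℝ)
          - ({w : List Bool | w.length = n+1 ∧ w ∉ {u | ∃ x, G x = u} ∧ w ∈ A}.ncard : ℝ))|
        / 2^(n+1)) ≤ τ n := by
  classical
  set L : Set (List Bool) := {u | ∃ x, G x = u} with hL
  set Im : Set (List Bool) := {u : List Bool | ∃ x : List Bool, x.length = n ∧ G x = u}
    with hIm
  set X1 : Set (List Bool) := {x | x.length = n ∧ G x ∈ A} with hX1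
  set X2 : Set (List Bool) := {x | x.length = n ∧ G x ∉ A} with hX2
  set W1 : Set (List Bool) := {w | w.length = n+1 ∧ w ∈ L ∧ w ∈ A} with hW1
  set W2 : Set (List Bool) := {w | w.length = n+1 ∧ w ∉ L ∧ w ∈ A} with hW2
  set S : Set (List Bool) := {y | y.length = n+1 ∧ y ∈ A} with hS
  -- finiteness
  have hfinfull : ∀ m : ℕ, {l : List Bool | l.length = m}.Finite :=
    fun m => List.finite_length_eq Bool m
  have hX1f : X1.Finite := (hfinfull n).subset (fun x hx => hx.1)
  have hX2f : X2.Finite := (hfinfull n).subset (fun x hx => hx.1)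
  have hW1f : W1.Finite := (hfinfull (n+1)).subset (fun x hx => hx.1)
  have hW2f : W2.Finite := (hfinfull (n+1)).subset (fun x hx => hx.1)
  have hSf : S.Finite := (hfinfull (n+1)).subset (fun x hx => hx.1)
  have hImeq : Im = G '' {l : List Bool | l.length = n} := by
    ext u; constructor
    · rintro ⟨x, hx, rfl⟩; exact ⟨x, hx, rfl⟩
    · rintro ⟨x, hx, rfl⟩; exact ⟨x, hx, rfl⟩
  have hImf : Im.Finite := hImeq ▸ (hfinfull n).image G
  -- W1 = Im ∩ A
  have hW1eq : W1 = Im ∩ A := by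
    ext w; constructor
    · rintro ⟨hlen, ⟨x, rfl⟩, hA⟩
      have : x.length = n := by have := hstretch x; omega
      exact ⟨⟨x, this, rfl⟩, hA⟩
    · rintro ⟨⟨x, hx, rfl⟩, hA⟩
      refine ⟨by rw [hstretch, hx], ⟨x, rfl⟩, hA⟩
  -- Im ∩ A = G '' X1, Im \ A = G '' X2
  have hIA : Im ∩ A = G '' X1 := by
    ext u; constructor
    · rintro ⟨⟨x, hx, rfl⟩, hA⟩; exact ⟨x, ⟨hx, hA⟩, rfl⟩
    · rintro ⟨x, ⟨hx, hA⟩, rfl⟩; exact ⟨⟨x, hx, rfl⟩, hA⟩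
  have hIA' : Im \ A = G '' X2 := by
    ext u; constructor
    · rintro ⟨⟨x, hx, rfl⟩, hA⟩; exact ⟨x, ⟨hx, hA⟩, rfl⟩
    · rintro ⟨x, ⟨hx, hA⟩, rfl⟩; exact ⟨⟨x, hx, rfl⟩, hA⟩
  -- cardinal relations (ℕ)
  have hle1 : (Im ∩ A).ncard ≤ X1.ncard := by
    rw [hIA]; exact Set.ncard_image_le hX1f
  have hle2 : (Im \ A).ncard ≤ X2.ncard := by
    rw [hIA']; exact Set.ncard_image_le hX2f
  have hsplitX : X1.ncard + X2.ncard = 2^n := by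
    rw [← ncard_len n, ← Set.ncard_union_eq ?_ hX1f hX2f]
    · congr 1; ext x
      simp only [hX1, hX2, Set.mem_union, Set.mem_setOf_eq]
      tauto
    · rw [Set.disjoint_left]; rintro x ⟨_, h⟩ ⟨_, h'⟩; exact h' h
  have hsplitIm : (Im ∩ A).ncard + (Im \ A).ncard = Im.ncard := by
    rw [← Set.ncard_union_eq ?_ (hImf.subset Set.inter_subset_left)
        (hImf.subset Set.diff_subset)]
    · congr 1; rw [Set.inter_union_diff]
    · rw [Set.disjoint_left]; rintro u ⟨_, hA⟩ ⟨_, hnA⟩; exact hnA hA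
  have hsplitS : W1.ncard + W2.ncard = S.ncard := by
    rw [← Set.ncard_union_eq ?_ hW1f hW2f]
    · congr 1; ext w
      simp only [hW1, hW2, hS, Set.mem_union, Set.mem_setOf_eq]
      tauto
    · rw [Set.disjoint_left]; rintro w ⟨_, h, _⟩ ⟨_, h', _⟩; exact h' h
  -- real versions
  have hbIA : (W1.ncard : ℝ) = ((Im ∩ A).ncard : ℝ) := by rw [hW1eq]
  have hIm : (Im.ncard : ℝ) = 2^n * (1 - τ n) := halmost n
  have hab1 : (W1.ncard : ℝ) ≤ (X1.ncard : ℝ) := by rw [hbIA]; exact_mod_cast hle1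
  have hab2 : (X1.ncard : ℝ) - (W1.ncard : ℝ) ≤ 2^n * τ n := by
    have e1 : (X1.ncard : ℝ) + (X2.ncard : ℝ) = 2^n := by exact_mod_cast hsplitX
    have e2 : (W1.ncard : ℝ) + ((Im \ A).ncard : ℝ) = (Im.ncard : ℝ) := by
      rw [hbIA]; exact_mod_cast hsplitIm
    have e3 : ((Im \ A).ncard : ℝ) ≤ (X2.ncard : ℝ) := by exact_mod_cast hle2
    nlinarith
  set a : ℝ := (X1.ncard : ℝ) with ha
  set b : ℝ := (W1.ncard : ℝ) with hb
  set c : ℝ := (W2.ncard : ℝ) with hc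
  have hprob : probIn A (n+1) = (b + c) / 2^(n+1) := by
    rw [probIn]
    congr 1
    rw [hb, hc, ← Nat.cast_add, hsplitS, hS]
  have hpow : (0:ℝ) < 2^n := by positivity
  have hpow1 : (0:ℝ) < 2^(n+1) := by positivity
  have h5 : b / 2^n - (b+c)/2^(n+1) = (b - c)/2^(n+1) := by
    rw [pow_succ]
    field_simp
    ring
  have hsym : |b / 2^n - (b+c)/2^(n+1)| = |b - c| / 2^(n+1) := by
    rw [h5, abs_div, abs_of_pos hpow1]
  rw [hprob, ← hsym]
  refine le_trans (abs_abs_sub_abs_le_abs_sub _ _) ?_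
  have heq : (a / 2^n - (b+c)/2^(n+1)) - (b / 2^n - (b+c)/2^(n+1)) = (a - b)/2^n := by
    ring
  rw [heq, abs_div, abs_of_pos hpow, abs_of_nonneg (by linarith : (0:ℝ) ≤ a - b)]
  rw [div_le_iff₀ hpow]
  nlinarith

theorem stmt8 (G : List Bool → List Bool)
    (hstretch : ∀ x, (G x).length = x.length + 1)
    (τ : ℕ → ℝ) (hτpos : ∀ n, 0 ≤ τ n) (hτ : Negligible τ)
    (halmost : ∀ n,
      ({u : List Bool | ∃ x : List Bool, x.length = n ∧ G x = u}.ncard : ℝ)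
        = 2^n * (1 - τ n))
    (C : Set (Set (List Bool))) :
    PRGAgainst G C ↔ GapPseudorandom {u | ∃ x, G x = u} C := by
  constructor
  · intro hP A hA
    have hF := hP A hA
    apply neg_shift_back'
    apply neg_mono' (ν := fun n =>
      |({x : List Bool | x.length = n ∧ G x ∈ A}.ncard : ℝ) / 2^n - probIn A (n+1)| + τ n)
    · intro n
      have := core_est G hstretch τ halmost A n
      have h' := abs_le.mp this
      linarith [h'.2, h'.1]
    · exact myNegAdd hF hτ
  · intro hG A hA
    have hg := hG A hA
    have hg' := neg_shift' hg
    apply neg_mono' (ν := fun n =>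
      |(({w : List Bool | w.length = n+1 ∧ w ∈ {u | ∃ x, G x = u} ∧ w ∈ A}.ncard : ℝ)
          - ({w : List Bool | w.length = n+1 ∧ w ∉ {u | ∃ x, G x = u} ∧ w ∈ A}.ncard : ℝ))|
        / 2^(n+1) + τ n)
    · intro n
      have := core_est G hstretch τ halmost A n
      have h' := abs_le.mp this
      linarith [h'.2, h'.1]
    · exact myNegAdd hg' hτ
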